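/- Let μ ∈ (0,1) and let c < −1 − 2√(μ(1−μ)). Define V : ℝ² → ℝ by V(x,y) := −c·(x² + y²) − μ·(x² + y²)/√(4x⁴ + 8x²y² − 4x² + 4y⁴ + 4y² + 1) − (1−μ)/2, which is smooth on ℝ² ∖ {(1/√2, 0), (−1/√2, 0)}. Set x₀ := √(1/2 − (1/2)·√(μ/(−c))). Then the set of points of ℝ² ∖ {(1/√2, 0), (−1/√2, 0)} at which the derivative of V vanishes is exactly {(0,0), (x₀, 0), (−x₀, 0)}. -/

import Mathlib

noncomputable def LCQ (x y : ℝ) : ℝ :=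
  4 * x ^ 4 + 8 * x ^ 2 * y ^ 2 - 4 * x ^ 2 + 4 * y ^ 4 + 4 * y ^ 2 + 1

noncomputable def VX (μ c x y : ℝ) : ℝ :=
  -(2*c)*x - 2*μ*x*(1 - 2*x^2 + 6*y^2) / (LCQ x y * Real.sqrt (LCQ x y))

noncomputable def VY (μ c x y : ℝ) : ℝ :=
  -(2*c)*y - 2*μ*y*(1 - 6*x^2 + 2*y^2) / (LCQ x y * Real.sqrt (LCQ x y))

lemma LCQ_pos {x y : ℝ} (h1 : (x, y) ≠ ((1 / Real.sqrt 2 : ℝ), (0:ℝ)))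
    (h2 : (x, y) ≠ (-(1 / Real.sqrt 2), 0)) : 0 < LCQ x y := by
  have key : LCQ x y = (2*x^2 + 2*y^2 - 1)^2 + 8*y^2 := by unfold LCQ; ring
  rcases lt_or_eq_of_le (by positivity : (0:ℝ) ≤ (2*x^2 + 2*y^2 - 1)^2 + 8*y^2) with h | h
  · rw [key]; exact h
  · exfalso
    have hy : y = 0 := by nlinarith [sq_nonneg (2*x^2 + 2*y^2 - 1), sq_nonneg y]
    have hx2 : x^2 = 1/2 := by nlinarith [sq_nonneg (2*x^2 + 2*y^2 - 1)]
    have habs : |x| = 1 / Real.sqrt 2 := by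
      rw [← Real.sqrt_sq_eq_abs, hx2, show (1:ℝ)/2 = (2:ℝ)⁻¹ by norm_num,
        Real.sqrt_inv, one_div]
    rcases (abs_eq (by positivity : (0:ℝ) ≤ 1 / Real.sqrt 2)).mp habs with h' | h'
    · exact h1 (by rw [hy, h'])
    · exact h2 (by rw [hy, h'])

set_option maxHeartbeats 1600000 in
lemma hasFDerivAt_LC (μ c : ℝ) {x y : ℝ} (hQ : 0 < LCQ x y) :
    HasFDerivAt (fun q : ℝ × ℝ =>
          -c * (q.1 ^ 2 + q.2 ^ 2)
            - μ * (q.1 ^ 2 + q.2 ^ 2) /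
              Real.sqrt (4 * q.1 ^ 4 + 8 * q.1 ^ 2 * q.2 ^ 2 - 4 * q.1 ^ 2
                + 4 * q.2 ^ 4 + 4 * q.2 ^ 2 + 1)
            - (1 - μ) / 2)
      (VX μ c x y • ContinuousLinearMap.fst ℝ ℝ ℝ + VY μ c x y • ContinuousLinearMap.snd ℝ ℝ ℝ)
      (x, y) := by
  have hQ' : (0:ℝ) < 4 * x ^ 4 + 8 * x ^ 2 * y ^ 2 - 4 * x ^ 2 + 4 * y ^ 4 + 4 * y ^ 2 + 1 := hQ
  have hs : 0 < Real.sqrt (4 * x ^ 4 + 8 * x ^ 2 * y ^ 2 - 4 * x ^ 2 + 4 * y ^ 4 + 4 * y ^ 2 + 1) :=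
    Real.sqrt_pos.mpr hQ'
  have hfst : HasFDerivAt (fun q : ℝ × ℝ => q.1) (ContinuousLinearMap.fst ℝ ℝ ℝ) (x, y) :=
    hasFDerivAt_fst
  have hsnd : HasFDerivAt (fun q : ℝ × ℝ => q.2) (ContinuousLinearMap.snd ℝ ℝ ℝ) (x, y) :=
    hasFDerivAt_snd
  have hx2 := (hasDerivAt_pow 2 x).comp_hasFDerivAt (x, y) hfst
  have hy2 := (hasDerivAt_pow 2 y).comp_hasFDerivAt (x, y) hsnd
  have hx4 := (hasDerivAt_pow 4 x).comp_hasFDerivAt (x, y) hfst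
  have hy4 := (hasDerivAt_pow 4 y).comp_hasFDerivAt (x, y) hsnd
  have hA : HasFDerivAt (fun q : ℝ × ℝ => q.1 ^ 2 + q.2 ^ 2) _ (x, y) := hx2.add hy2
  have hQd : HasFDerivAt (fun q : ℝ × ℝ =>
      4 * q.1 ^ 4 + 8 * q.1 ^ 2 * q.2 ^ 2 - 4 * q.1 ^ 2 + 4 * q.2 ^ 4 + 4 * q.2 ^ 2 + 1)
      _ (x, y) :=
    (((((hx4.const_mul 4).add ((hx2.const_mul 8).mul hy2)).sub (hx2.const_mul 4)).add
      (hy4.const_mul 4)).add (hy2.const_mul 4)).add_const 1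
  have hS := hQd.sqrt (ne_of_gt hQ')
  have hinv := (hasDerivAt_inv (ne_of_gt hs)).comp_hasFDerivAt (x, y) hS
  have hN := hA.const_mul μ
  have hdiv := hN.mul hinv
  have big := ((hA.const_mul (-c)).sub hdiv).sub_const ((1 - μ) / 2)
  refine HasFDerivAt.congr_fderiv big ?_
  symm
  refine ContinuousLinearMap.ext fun v => ?_
  simp only [ContinuousLinearMap.add_apply, ContinuousLinearMap.coe_smul',
    ContinuousLinearMap.coe_fst', ContinuousLinearMap.coe_snd', Pi.smul_apply, smul_eq_mul,
    ContinuousLinearMap.coe_sub', Pi.sub_apply, ContinuousLinearMap.smul_apply]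
  simp only [Function.comp_apply, Function.comp, VX, VY, LCQ]
  norm_num
  have hs2 : Real.sqrt (4 * x ^ 4 + 8 * x ^ 2 * y ^ 2 - 4 * x ^ 2 + 4 * y ^ 4 + 4 * y ^ 2 + 1) ^ 2
      = 4 * x ^ 4 + 8 * x ^ 2 * y ^ 2 - 4 * x ^ 2 + 4 * y ^ 4 + 4 * y ^ 2 + 1 :=
    Real.sq_sqrt hQ'.le
  set s : ℝ := Real.sqrt (4 * x ^ 4 + 8 * x ^ 2 * y ^ 2 - 4 * x ^ 2 + 4 * y ^ 4 + 4 * y ^ 2 + 1) with hsd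
  set P : ℝ := 4 * x ^ 4 + 8 * x ^ 2 * y ^ 2 - 4 * x ^ 2 + 4 * y ^ 4 + 4 * y ^ 2 + 1 with hPd
  have e3 : s^3 = P * s := by rw [pow_succ, hs2]
  have e4 : s^4 = P^2 := by rw [show (4:ℕ) = 2*2 from rfl, pow_mul, hs2]
  have e5 : s^5 = P^2 * s := by rw [pow_succ, e4]
  have e6 : s^6 = P^3 := by rw [show (6:ℕ) = 2*3 from rfl, pow_mul, hs2]
  clear_value s P
  have hP0 : P ≠ 0 := ne_of_gt hQ'
  have hs0 : s ≠ 0 := ne_of_gt hs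
  field_simp
  ring_nf
  simp only [e6, e5, e4, e3, hs2]
  subst hPd
  ring


lemma fderiv_zero_iff (μ c : ℝ) {x y : ℝ} (hQ : 0 < LCQ x y) :
    fderiv ℝ (fun q : ℝ × ℝ =>
          -c * (q.1 ^ 2 + q.2 ^ 2)
            - μ * (q.1 ^ 2 + q.2 ^ 2) /
              Real.sqrt (4 * q.1 ^ 4 + 8 * q.1 ^ 2 * q.2 ^ 2 - 4 * q.1 ^ 2
                + 4 * q.2 ^ 4 + 4 * q.2 ^ 2 + 1)
            - (1 - μ) / 2) (x, y) = 0 ↔ VX μ c x y = 0 ∧ VY μ c x y = 0 := by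
  rw [(hasFDerivAt_LC μ c hQ).fderiv]
  constructor
  · intro h
    constructor
    · have := ContinuousLinearMap.ext_iff.mp h ((1:ℝ), (0:ℝ))
      simpa using this
    · have := ContinuousLinearMap.ext_iff.mp h ((0:ℝ), (1:ℝ))
      simpa using this
  · rintro ⟨h1, h2⟩
    refine ContinuousLinearMap.ext fun v => ?_
    simp [h1, h2]

set_option maxHeartbeats 1000000 in
/-- The critical points of the Levi-Civita potential `V` on its domain of smoothness
are exactly `(0,0)` and `(±x₀, 0)` with `x₀ = √(1/2 − (1/2)√(μ/(−c)))`. -/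
theorem stmt_9 (μ c : ℝ) (hμ : μ ∈ Set.Ioo (0 : ℝ) 1)
    (hc : c < -1 - 2 * Real.sqrt (μ * (1 - μ))) :
    {p : ℝ × ℝ | p ≠ (1 / Real.sqrt 2, 0) ∧ p ≠ (-(1 / Real.sqrt 2), 0) ∧
        fderiv ℝ (fun q : ℝ × ℝ =>
          -c * (q.1 ^ 2 + q.2 ^ 2)
            - μ * (q.1 ^ 2 + q.2 ^ 2) /
              Real.sqrt (4 * q.1 ^ 4 + 8 * q.1 ^ 2 * q.2 ^ 2 - 4 * q.1 ^ 2
                + 4 * q.2 ^ 4 + 4 * q.2 ^ 2 + 1)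
            - (1 - μ) / 2) p = 0}
      = {((0 : ℝ), (0 : ℝ)),
          (Real.sqrt (1 / 2 - (1 / 2) * Real.sqrt (μ / (-c))), 0),
          (-Real.sqrt (1 / 2 - (1 / 2) * Real.sqrt (μ / (-c))), 0)} := by
  obtain ⟨hμ0, hμ1⟩ := hμ
  have hsqnn : 0 ≤ Real.sqrt (μ * (1 - μ)) := Real.sqrt_nonneg _
  have hc1 : 1 < -c := by nlinarith
  have hc0 : 0 < -c := by linarith
  set u := Real.sqrt (μ / (-c)) with hud
  have hdiv0 : 0 < μ / (-c) := div_pos hμ0 hc0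
  have hu2 : u ^ 2 = μ / (-c) := Real.sq_sqrt hdiv0.le
  have hu0 : 0 < u := Real.sqrt_pos.mpr hdiv0
  have hdiv1 : μ / (-c) < 1 := (div_lt_one hc0).mpr (by linarith)
  have hu1 : u < 1 := by nlinarith [hu2]
  have hcne : c ≠ 0 := by intro h; rw [h] at hc1; norm_num at hc1
  have hmuu : μ = -c * u ^ 2 := by
    have h := hu2
    field_simp at h
    linear_combination h
  set t := 1 / 2 - (1 / 2) * u with htd
  have ht0 : 0 < t := by rw [htd]; linarith
  have hth : t < 1/2 := by rw [htd]; linarith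
  set x₀ := Real.sqrt t with hx0d
  have hx0sq : x₀ ^ 2 = t := Real.sq_sqrt ht0.le
  have hx00 : 0 < x₀ := Real.sqrt_pos.mpr ht0
  have hhalf : (1:ℝ) / Real.sqrt 2 = Real.sqrt (1/2) := by
    rw [show (1:ℝ)/2 = (2:ℝ)⁻¹ by norm_num, Real.sqrt_inv, one_div]
  have hx0lt : x₀ < 1 / Real.sqrt 2 := by
    rw [hhalf]; exact Real.sqrt_lt_sqrt ht0.le hth
  have hinv2pos : (0:ℝ) < 1 / Real.sqrt 2 := by positivity
  ext ⟨x, y⟩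
  simp only [Set.mem_setOf_eq, Set.mem_insert_iff, Set.mem_singleton_iff, Prod.mk.injEq]
  constructor
  · rintro ⟨h1, h2, h0⟩
    have hQ : 0 < LCQ x y := LCQ_pos h1 h2
    obtain ⟨hVx, hVy⟩ := (fderiv_zero_iff μ c hQ).mp h0
    have hs0 : 0 < Real.sqrt (LCQ x y) := Real.sqrt_pos.mpr hQ
    have hne : LCQ x y * Real.sqrt (LCQ x y) ≠ 0 := by positivity
    rw [VX] at hVx
    rw [VY] at hVy
    have hX : x * ((-c) * (LCQ x y * Real.sqrt (LCQ x y)) - μ * (1 - 2*x^2 + 6*y^2)) = 0 := by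
      field_simp at hVx
      linear_combination hVx / 2
    have hY : y * ((-c) * (LCQ x y * Real.sqrt (LCQ x y)) - μ * (1 - 6*x^2 + 2*y^2)) = 0 := by
      field_simp at hVy
      linear_combination hVy / 2
    by_cases hx : x = 0
    · by_cases hy : y = 0
      · exact Or.inl ⟨hx, hy⟩
      · exfalso
        subst hx
        have hLq : LCQ 0 y = (2*y^2 + 1)^2 := by unfold LCQ; ring
        have hseq : Real.sqrt (LCQ 0 y) = 2*y^2 + 1 := by
          rw [hLq, Real.sqrt_sq (by positivity)]
        have hE : (-c) * ((2*y^2+1)^2 * (2*y^2+1)) - μ * (1 - 0 + 2*y^2) = 0 := by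
          have := mul_eq_zero.mp hY
          rcases this with h | h
          · exact absurd h hy
          · rw [hseq] at h; rw [hLq] at h; linear_combination h
        have hE' : (-c) * (2*y^2+1)^3 = μ * (1 + 2*y^2) := by linear_combination hE
        have e1 : (-c) * (2*y^2+1) ≤ (-c) * (2*y^2+1)^3 := by
          nlinarith [mul_nonneg (mul_nonneg hc0.le (show (0:ℝ) ≤ 2*y^2+1 by positivity))
            (show (0:ℝ) ≤ 4*y^4+4*y^2 by positivity)]
        have e2 : μ * (1 + 2*y^2) < 1 * (1 + 2*y^2) := by nlinarith [sq_nonneg y]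
        have e3 : (1:ℝ) * (1 + 2*y^2) < (-c) * (2*y^2+1) := by nlinarith [sq_nonneg y]
        linarith
    · by_cases hy : y = 0
      · subst hy
        have hLq : LCQ x 0 = (1 - 2*x^2)^2 := by unfold LCQ; ring
        have hw0 : 1 - 2*x^2 ≠ 0 := by
          intro h
          rw [hLq, h] at hQ; norm_num at hQ
        have hseq : Real.sqrt (LCQ x 0) = |1 - 2*x^2| := by
          rw [hLq, Real.sqrt_sq_eq_abs]
        have hE : (-c) * ((1-2*x^2)^2 * |1 - 2*x^2|) - μ * (1 - 2*x^2) = 0 := by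
          rcases mul_eq_zero.mp hX with h | h
          · exact absurd h hx
          · rw [hseq] at h; rw [hLq] at h; linear_combination h
        rcases lt_or_gt_of_ne hw0 with hw | hw
        · exfalso
          rw [abs_of_neg hw] at hE
          have hE' : c * (1-2*x^2)^3 = μ * (1-2*x^2) := by linear_combination hE
          nlinarith [mul_pos hc0 (mul_pos (mul_pos (neg_pos.mpr hw) (neg_pos.mpr hw)) (neg_pos.mpr hw)), mul_pos hμ0 (neg_pos.mpr hw)]
        · rw [abs_of_pos hw] at hE
          have hc' : (-c) * (1-2*x^2)^2 = μ := by
            have h3 : ((-c) * (1-2*x^2)^2 - μ) * (1-2*x^2) = 0 := by linear_combination hE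
            rcases mul_eq_zero.mp h3 with h4 | h4
            · linarith
            · exact absurd h4 hw0
          have hw2 : (1-2*x^2)^2 = u^2 := by
            rw [hu2, eq_div_iff (ne_of_gt hc0)]
            linear_combination hc'
          have hwu : 1 - 2*x^2 = u := by
            rw [← Real.sqrt_sq hw.le, hw2, Real.sqrt_sq hu0.le]
          have hx2t : x^2 = t := by rw [htd]; linarith
          have habs : |x| = x₀ := by
            rw [← Real.sqrt_sq_eq_abs, hx2t]
          rcases (abs_eq hx00.le).mp habs with h' | h'
          · exact Or.inr (Or.inl ⟨h', rfl⟩)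
          · exact Or.inr (Or.inr ⟨h', rfl⟩)
      · exfalso
        rcases mul_eq_zero.mp hX with h | h
        · exact absurd h hx
        rcases mul_eq_zero.mp hY with h' | h'
        · exact absurd h' hy
        have hx2 : 0 < x^2 := by positivity
        have hy2 : 0 < y^2 := by positivity
        nlinarith [h, h', mul_pos hμ0 hx2, mul_pos hμ0 hy2]
  · -- backward
    have hQ0 : 0 < LCQ 0 0 := by unfold LCQ; norm_num
    have hwu : 1 - 2*x₀^2 = u := by rw [hx0sq, htd]; ring
    have hLq : LCQ x₀ 0 = (1 - 2*x₀^2)^2 := by unfold LCQ; ring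
    have hLqn : LCQ (-x₀) 0 = (1 - 2*x₀^2)^2 := by unfold LCQ; ring
    have hQp : 0 < LCQ x₀ 0 := by rw [hLq, hwu]; positivity
    have hQn : 0 < LCQ (-x₀) 0 := by rw [hLqn, hwu]; positivity
    have hseq : Real.sqrt (LCQ x₀ 0) = u := by rw [hLq, hwu, Real.sqrt_sq hu0.le]
    have hseqn : Real.sqrt (LCQ (-x₀) 0) = u := by rw [hLqn, hwu, Real.sqrt_sq hu0.le]
    rintro (⟨rfl, rfl⟩ | ⟨rfl, rfl⟩ | ⟨rfl, rfl⟩)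
    · refine ⟨?_, ?_, ?_⟩
      · intro h; rw [Prod.mk.injEq] at h; linarith [h.1]
      · intro h; rw [Prod.mk.injEq] at h; linarith [h.1]
      · refine (fderiv_zero_iff μ c hQ0).mpr ⟨?_, ?_⟩
        · rw [VX]; norm_num
        · rw [VY]; norm_num
    · refine ⟨?_, ?_, ?_⟩
      · intro h; rw [Prod.mk.injEq] at h; linarith [h.1]
      · intro h; rw [Prod.mk.injEq] at h; linarith [h.1]
      · refine (fderiv_zero_iff μ c hQp).mpr ⟨?_, ?_⟩
        · rw [VX, hseq]
          rw [show (1 - 2*x₀^2 + 6*(0:ℝ)^2) = u by rw [← hwu]; ring]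
          rw [hmuu]
          rw [hLq, hwu]
          field_simp
          ring
        · rw [VY]; norm_num
    · refine ⟨?_, ?_, ?_⟩
      · intro h; rw [Prod.mk.injEq] at h; linarith [h.1]
      · intro h; rw [Prod.mk.injEq] at h
        have : x₀ = 1 / Real.sqrt 2 := by linarith [h.1]
        linarith
      · refine (fderiv_zero_iff μ c hQn).mpr ⟨?_, ?_⟩
        · rw [VX, hseqn]
          rw [show (1 - 2*(-x₀)^2 + 6*(0:ℝ)^2) = u by rw [← hwu]; ring]
          rw [hmuu]
          rw [hLqn, hwu]
          field_simp
          ring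
        · rw [VY]; norm_num
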